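/- For every natural number n ≥ 1, every monomial k^α·b^β·X^γ·Y^δ occurring in the support of F n satisfies: γ is even, δ = 2^n − γ, and β = 2^{n−1} − γ/2. (That is, F n has the form ∑_{i=0}^{2^{n−1}} c_i·X^{2i}·Y^{2^n − 2i}·b^{2^{n−1} − i} with c_i ∈ ℤ[k].) -/

import Mathlib

open MvPolynomial

/-- The pair `(Fₙ, Gₙ)` in `ℤ[k, b, X, Y]` (variables `0 ↦ k`, `1 ↦ b`, `2 ↦ X`, `3 ↦ Y`),
defined by `F 1 = k (X² + b Y²)`, `G 1 = X Y`,
`F (n+1) = k ((F n)² + b (G n)²)`, `G (n+1) = (F n) (G n)`. -/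
noncomputable def FG : ℕ → MvPolynomial (Fin 4) ℤ × MvPolynomial (Fin 4) ℤ
  | 0 => (0, 0)
  | 1 => (X 0 * (X 2 ^ 2 + X 1 * X 3 ^ 2), X 2 * X 3)
  | n + 2 =>
      (X 0 * ((FG (n + 1)).1 ^ 2 + X 1 * (FG (n + 1)).2 ^ 2),
        (FG (n + 1)).1 * (FG (n + 1)).2)

noncomputable def F (n : ℕ) : MvPolynomial (Fin 4) ℤ := (FG n).1
noncomputable def G (n : ℕ) : MvPolynomial (Fin 4) ℤ := (FG n).2

/-- Weight function: `k ↦ (0,0)`, `b ↦ (0,-2)`, `X ↦ (1,0)`, `Y ↦ (1,1)`. -/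
def wt : Fin 4 → ℤ × ℤ := ![(0, 0), (0, -2), (1, 0), (1, 1)]

lemma FG_hom : ∀ n : ℕ, 1 ≤ n →
    IsWeightedHomogeneous wt (F n) ((2 ^ n : ℤ), 0) ∧
    IsWeightedHomogeneous wt (G n) ((2 ^ n : ℤ), 1) := by
  intro n hn
  induction n with
  | zero => omega
  | succ n ih =>
    have hX : ∀ i : Fin 4,
        IsWeightedHomogeneous wt (X i : MvPolynomial (Fin 4) ℤ) (wt i) :=
      fun i => isWeightedHomogeneous_X ℤ wt i
    match n, ih with
    | 0, _ =>
      constructor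
      · have h1 : IsWeightedHomogeneous wt
            ((X 2 : MvPolynomial (Fin 4) ℤ) ^ 2 + X 1 * X 3 ^ 2) ((2 : ℤ), 0) := by
          have hx2 : IsWeightedHomogeneous wt
              ((X 2 : MvPolynomial (Fin 4) ℤ) ^ 2) ((2 : ℤ), 0) := by
            have := (hX 2).mul (hX 2)
            rw [← sq] at this
            convert this using 1; simp [wt, Prod.ext_iff]
          have hy2 : IsWeightedHomogeneous wt
              ((X 1 : MvPolynomial (Fin 4) ℤ) * X 3 ^ 2) ((2 : ℤ), 0) := by
            have := (hX 1).mul ((hX 3).mul (hX 3))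
            rw [← sq] at this
            convert this using 1; simp [wt, Prod.ext_iff]
          exact hx2.add hy2
        have := (hX 0).mul h1
        have h2 : IsWeightedHomogeneous wt (F 1) (wt 0 + ((2 : ℤ), 0)) := this
        convert h2 using 1; simp [wt, Prod.ext_iff]
      · have := (hX 2).mul (hX 3)
        have h2 : IsWeightedHomogeneous wt (G 1) (wt 2 + wt 3) := this
        convert h2 using 1; simp [wt, Prod.ext_iff]
    | n + 1, ih =>
      obtain ⟨hF, hG⟩ := ih (by omega)
      constructor
      · have h1 : IsWeightedHomogeneous wt
            ((F (n + 1)) ^ 2 + X 1 * (G (n + 1)) ^ 2)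
            ((2 ^ (n + 2) : ℤ), 0) := by
          have hf2 := hF.mul hF
          rw [← sq] at hf2
          have hg2 := (hX 1).mul (hG.mul hG)
          rw [← sq] at hg2
          have hf2' : IsWeightedHomogeneous wt ((F (n + 1)) ^ 2)
              ((2 ^ (n + 2) : ℤ), 0) := by
            convert hf2 using 1; simp [Prod.ext_iff]; ring
          have hg2' : IsWeightedHomogeneous wt
              (X 1 * (G (n + 1)) ^ 2) ((2 ^ (n + 2) : ℤ), 0) := by
            convert hg2 using 1; simp [wt, Prod.ext_iff]; ring
          exact hf2'.add hg2'
        have h2 := (hX 0).mul h1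
        have h3 : IsWeightedHomogeneous wt (F (n + 2))
            (wt 0 + ((2 ^ (n + 2) : ℤ), 0)) := h2
        convert h3 using 1; simp [wt, Prod.ext_iff]
      · have h2 := hF.mul hG
        have h3 : IsWeightedHomogeneous wt (G (n + 2))
            (((2 ^ (n + 1) : ℤ), 0) + ((2 ^ (n + 1) : ℤ), 1)) := h2
        convert h3 using 1; simp [Prod.ext_iff]; ring

/-- Every monomial `k^α b^β X^γ Y^δ` in the support of `F n` has `γ` even,
`δ = 2^n - γ` and `β = 2^(n-1) - γ/2`. -/
theorem support_F_form (n : ℕ) (hn : 1 ≤ n) :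
    ∀ m ∈ (F n).support,
      Even (m 2) ∧ m 3 = 2 ^ n - m 2 ∧ m 1 = 2 ^ (n - 1) - m 2 / 2 := by
  intro m hm
  have hF := (FG_hom n hn).1
  have hcoeff : coeff m (F n) ≠ 0 := (mem_support_iff.mp hm)
  have hw := hF hcoeff
  have hweight : Finsupp.weight wt m = ∑ i : Fin 4, m i • wt i := by
    rw [Finsupp.weight_apply]
    exact Finsupp.sum_fintype _ _ (by simp)
  rw [hweight] at hw
  have hsum : ∑ i : Fin 4, m i • wt i =
      ((m 2 + m 3 : ℤ), (m 3 : ℤ) - 2 * m 1) := by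
    simp [Fin.sum_univ_four, wt, Prod.ext_iff]
    ring
  rw [hsum, Prod.ext_iff] at hw
  obtain ⟨h1, h2⟩ := hw
  dsimp only at h1 h2
  have h1' : m 2 + m 3 = 2 ^ n := by exact_mod_cast h1
  have h2'' : m 3 = 2 * m 1 := by omega
  have hpow : 2 ^ n = 2 * 2 ^ (n - 1) := by
    rw [← pow_succ']
    congr 1
    omega
  refine ⟨⟨2 ^ (n-1) - m 1, by omega⟩, by omega, by omega⟩
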